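/- Let n ≥ 1 and let S be a subsemigroup of T_n consisting only of nonpermutational transformations; for i ∈ {1,…,n} let S_i = {f ∈ S : the unique fixed point of f is i}. Suppose that for all i < j and k < ℓ with i ≠ k there exists f ∈ S_n with if = j and kf = ℓ. Then |S| ≤ Σ_{i=1}^{n} (n−1)!/(n−i)! = (n−1)!·Σ_{j=0}^{n−1} 1/j!, i.e., |S| ≤ ⌊e·(n−1)!⌋. -/

import Mathlib

/-- A transformation `f` of `Fin n` is *nonpermutational* if every nonempty
subset `X` with `X.image f = X` is a singleton. -/
def Nonpermutational {n : ℕ} (f : Fin n → Fin n) : Prop :=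
  ∀ X : Finset (Fin n), X.Nonempty → X.image f = X → X.card = 1

/-- `FixIs f i` says that `i` is the unique fixed point of `f`. -/
def FixIs {n : ℕ} (f : Fin n → Fin n) (i : Fin n) : Prop :=
  f i = i ∧ ∀ j, f j = j → j = i

lemma fix_unique {n : ℕ} {u : Fin n → Fin n} (hu : Nonpermutational u)
    {a b : Fin n} (ha : u a = a) (hb : u b = b) : a = b := by
  by_contra hab
  have h := hu {a, b} ⟨a, by simp⟩ (by
    rw [Finset.image_insert, Finset.image_singleton, ha, hb])
  rw [Finset.card_insert_of_notMem (by simp [hab]), Finset.card_singleton] at h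
  omega

lemma no_swap {n : ℕ} {u : Fin n → Fin n} (hu : Nonpermutational u)
    {a b : Fin n} (hab : a ≠ b) (h1 : u a = b) (h2 : u b = a) : False := by
  have h := hu {a, b} ⟨a, by simp⟩ (by
    rw [Finset.image_insert, Finset.image_singleton, h1, h2, Finset.pair_comm])
  rw [Finset.card_insert_of_notMem (by simp [hab]), Finset.card_singleton] at h
  omega

lemma no_cycle {n : ℕ} {f : Fin n → Fin n} (hf : Nonpermutational f)
    {z : Fin n} {m : ℕ} (hm : 1 ≤ m) (h : f^[m] z = z) : f z = z := by
  set X : Finset (Fin n) := (Finset.range m).image (fun i => f^[i] z) with hX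
  have hzX : z ∈ X := Finset.mem_image.2 ⟨0, by simp; omega, rfl⟩
  have himg : X.image f = X := by
    ext w
    simp only [hX, Finset.mem_image, Finset.mem_range]
    constructor
    · rintro ⟨v, ⟨i, hi, rfl⟩, rfl⟩
      by_cases hii : i + 1 < m
      · exact ⟨i + 1, hii, Function.iterate_succ_apply' f i z⟩
      · refine ⟨0, by omega, ?_⟩
        have h1 : f (f^[i] z) = f^[i + 1] z := (Function.iterate_succ_apply' f i z).symm
        have h2 : i + 1 = m := by omega
        simp only [Function.iterate_zero_apply]
        rw [h1, h2, h]
    · rintro ⟨i, hi, rfl⟩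
      rcases Nat.eq_zero_or_pos i with rfl | hi0
      · refine ⟨f^[m - 1] z, ⟨m - 1, by omega, rfl⟩, ?_⟩
        have h1 : f (f^[m - 1] z) = f^[m - 1 + 1] z := (Function.iterate_succ_apply' f (m - 1) z).symm
        have h2 : m - 1 + 1 = m := by omega
        rw [h1, h2, h]
        simp
      · refine ⟨f^[i - 1] z, ⟨i - 1, by omega, rfl⟩, ?_⟩
        have h1 : f (f^[i - 1] z) = f^[i - 1 + 1] z := (Function.iterate_succ_apply' f (i - 1) z).symm
        have h2 : i - 1 + 1 = i := by omega
        rw [h1, h2]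
  have hcard := hf X ⟨z, hzX⟩ himg
  obtain ⟨c, hc⟩ := Finset.card_eq_one.1 hcard
  have hz : z = c := by have := hzX; rwa [hc, Finset.mem_singleton] at this
  have hfz : f z ∈ X := by rw [← himg]; exact Finset.mem_image_of_mem f hzX
  rw [hc, Finset.mem_singleton] at hfz
  rw [hfz, hz]

lemma fix_exists {n : ℕ} (hn : 1 ≤ n) {f : Fin n → Fin n} (hf : Nonpermutational f) :
    ∃ p, f p = p := by
  have aux : ∀ i j : ℕ, i < j → f^[i] ⟨0, hn⟩ = f^[j] ⟨0, hn⟩ → ∃ p, f p = p := by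
    intro i j hij heq
    refine ⟨f^[i] ⟨0, hn⟩, no_cycle hf (m := j - i) (by omega) ?_⟩
    rw [← Function.iterate_add_apply]
    have : j - i + i = j := by omega
    rw [this, ← heq]
  have hcard : (Finset.univ : Finset (Fin n)).card < (Finset.range (n + 1)).card := by
    simp
  obtain ⟨i, -, j, -, hij, hfij⟩ :=
    Finset.exists_ne_map_eq_of_card_lt_of_maps_to hcard
      (f := fun k => f^[k] ⟨0, hn⟩) (fun a _ => Finset.mem_univ _)
  rcases hij.lt_or_gt with h | h
  · exact aux i j h hfij
  · exact aux j i h hfij.symm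

section Structure

variable {n : ℕ} (hn3 : 3 ≤ n) (S : Finset (Fin n → Fin n))
  (hclosed : ∀ f ∈ S, ∀ g ∈ S, (fun x => g (f x)) ∈ S)
  (hnp : ∀ f ∈ S, Nonpermutational f)
  (hrich : ∀ i j k l : Fin n, i < j → k < l → i ≠ k →
      ∃ f ∈ S, FixIs f (⟨n - 1, by omega⟩ : Fin n) ∧ f i = j ∧ f k = l)

include hn3 hclosed hnp hrich in
lemma structure_lemma {f : Fin n → Fin n} (hf : f ∈ S) {p : Fin n} (hp : f p = p) :
    ∀ x : Fin n, (x < p → x < f x) ∧ (p < x → f x = p) := by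
  set t : Fin n := ⟨n - 1, by omega⟩ with ht
  have htt : ∀ h : Fin n → Fin n, FixIs h t → h t = t := fun h hh => hh.1
  -- M1: no two distinct descents with distinct values
  have M1 : ∀ x₁ x₂ y₁ y₂ : Fin n, f x₁ = y₁ → f x₂ = y₂ → y₁ < x₁ → y₂ < x₂ →
      x₁ ≠ x₂ → y₁ ≠ y₂ → False := by
    intro x₁ x₂ y₁ y₂ e1 e2 l1 l2 hx hy
    obtain ⟨h, hh, -, h1, h2⟩ := hrich y₁ x₁ y₂ x₂ l1 l2 hy
    have hu := hnp _ (hclosed f hf h hh)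
    have u1 : (fun x => h (f x)) x₁ = x₁ := by show h (f x₁) = x₁; rw [e1, h1]
    have u2 : (fun x => h (f x)) x₂ = x₂ := by show h (f x₂) = x₂; rw [e2, h2]
    exact hx (fix_unique hu u1 u2)
  -- R1: one-point richness
  have R1 : ∀ y x : Fin n, y < x → ∃ h ∈ S, FixIs h t ∧ h y = x := by
    intro y x hyx
    by_cases hy0 : y.val = 0
    · obtain ⟨h, hh, hfix, h1, -⟩ := hrich y x ⟨1, by omega⟩ ⟨2, by omega⟩ hyx
        (by show (1 : ℕ) < 2; omega)
        (by intro hc; have h2 : y.val = 1 := congrArg Fin.val hc; omega)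
      exact ⟨h, hh, hfix, h1⟩
    · obtain ⟨h, hh, hfix, h1, -⟩ := hrich y x ⟨0, by omega⟩ ⟨1, by omega⟩ hyx
        (by show (0 : ℕ) < 1; omega)
        (by intro hc; have h2 : y.val = 0 := congrArg Fin.val hc; omega)
      exact ⟨h, hh, hfix, h1⟩
  have hpu : ∀ a, f a = a → a = p := fun a ha => fix_unique (hnp f hf) ha hp
  by_cases hpt : p = t
  · -- p is the top element
    intro x
    constructor
    · intro hxp
      rcases lt_trichotomy (f x) x with hlt | heq | hgt
      · exfalso
        have hxt : x ≠ t := by rw [← hpt]; exact ne_of_lt hxp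
        obtain ⟨h, hh, hfix, h1⟩ := R1 (f x) x hlt
        have hu := hnp _ (hclosed f hf h hh)
        have u1 : (fun z => h (f z)) x = x := by show h (f x) = x; rw [h1]
        have u2 : (fun z => h (f z)) t = t := by
          show h (f t) = t; rw [← hpt, hp, hpt, hfix.1]
        exact hxt (fix_unique hu u1 u2)
      · exact absurd (hpu x heq) (ne_of_lt hxp)
      · exact hgt
    · intro hpx
      exfalso
      have h1 : p.val < x.val := hpx
      have h2 : p.val = n - 1 := by rw [hpt]
      have := x.isLt
      omega
  · -- p < t
    have hplt : p < t := by
      have h2 : p.val ≠ n - 1 := fun hc => hpt (Fin.ext hc)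
      have h3 := p.isLt
      show p.val < n - 1
      omega
    have hle_t : ∀ a : Fin n, a ≤ t := by
      intro a
      have := a.isLt
      show a.val ≤ n - 1
      omega
    have hftlt : f t < t := by
      rcases lt_or_eq_of_le (hle_t (f t)) with h | h
      · exact h
      · exact absurd (hpu t h).symm hpt
    -- y₀ = f t; first, ¬ y₀ < p
    have hy0p : ¬ f t < p := by
      intro hlt
      obtain ⟨h, hh, -, h1, h2⟩ := hrich (f t) p p t hlt hplt (ne_of_lt hlt)
      have hu := hnp _ (hclosed f hf h hh)
      have u1 : (fun z => h (f z)) p = t := by show h (f p) = t; rw [hp, h2]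
      have u2 : (fun z => h (f z)) t = p := by show h (f t) = p; rw [h1]
      exact no_swap hu (ne_of_lt hplt) u1 u2
    -- second, ¬ p < y₀ (orbit argument)
    have hy0gt : ¬ p < f t := by
      intro hgt
      have hNC : ∀ m : ℕ, 1 ≤ m → f^[m] (f t) = f t → False := by
        intro m hm hcyc
        have := hpu (f t) (no_cycle (hnp f hf) hm hcyc)
        rw [this] at hgt
        exact lt_irrefl p hgt
      have hdesc : ∃ j : ℕ, f^[j + 1] (f t) < f^[j] (f t) := by
        by_contra hmono
        push_neg at hmono
        have mono : ∀ i j : ℕ, i ≤ j → f^[i] (f t) ≤ f^[j] (f t) := by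
          intro i j hij
          induction j with
          | zero => simp_all
          | succ m ih =>
            rcases Nat.lt_or_ge i (m + 1) with h | h
            · exact le_trans (ih (by omega)) (hmono m)
            · have : i = m + 1 := by omega
              rw [this]
        have aux : ∀ i j : ℕ, i < j → f^[i] (f t) = f^[j] (f t) → False := by
          intro i j hij heq
          have h1 : f^[i + 1] (f t) ≤ f^[j] (f t) := mono (i + 1) j (by omega)
          rw [← heq] at h1
          have h2 : f^[i] (f t) = f^[i + 1] (f t) := le_antisymm (mono i (i + 1) (by omega)) h1
          have h3 : f (f^[i] (f t)) = f^[i] (f t) := by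
            rw [Function.iterate_succ_apply' f i (f t)] at h2
            exact h2.symm
          have h4 := hpu _ h3
          have h5 : f t ≤ f^[i] (f t) := mono 0 i (by omega)
          rw [h4] at h5
          exact absurd hgt (not_lt.2 h5)
        have hcard : (Finset.univ : Finset (Fin n)).card < (Finset.range (n + 1)).card := by simp
        obtain ⟨i, -, j, -, hij, hfij⟩ :=
          Finset.exists_ne_map_eq_of_card_lt_of_maps_to hcard
            (f := fun k => f^[k] (f t)) (fun a _ => Finset.mem_univ _)
        rcases hij.lt_or_gt with h | h
        · exact aux i j h hfij
        · exact aux j i h hfij.symm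
      set k := Nat.find hdesc with hk
      have hkspec : f^[k + 1] (f t) < f^[k] (f t) := Nat.find_spec hdesc
      have hmin : ∀ j, j < k → ¬ f^[j + 1] (f t) < f^[j] (f t) := fun j hj => Nat.find_min hdesc hj
      by_cases hkt : f^[k] (f t) = t
      · refine hNC (k + 1) (by omega) ?_
        rw [Function.iterate_succ_apply' f k (f t), hkt]
      · by_cases hky : f^[k + 1] (f t) = f t
        · exact hNC (k + 1) (by omega) hky
        · exact M1 t (f^[k] (f t)) (f t) (f^[k + 1] (f t)) rfl
            (Function.iterate_succ_apply' f k (f t)).symm hftlt hkspec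
            (fun h => hkt h.symm) (fun h => hky h.symm)
    have hft : f t = p := le_antisymm (not_lt.1 hy0gt) (not_lt.1 hy0p)
    have hdescentP : ∀ x : Fin n, f x < x → f x = p := by
      intro x hlt
      by_cases hxt : x = t
      · rw [hxt]; exact hft
      · by_contra hne
        exact M1 t x p (f x) hft rfl hplt hlt (fun h => hxt h.symm) (fun h => hne h.symm)
    intro x
    constructor
    · intro hxp
      rcases lt_trichotomy (f x) x with hlt | heq | hgt
      · exfalso
        have := hdescentP x hlt
        rw [this] at hlt
        exact absurd hxp (not_lt.2 (le_of_lt hlt))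
      · exact absurd (hpu x heq) (ne_of_lt hxp)
      · exact hgt
    · intro hpx
      rcases lt_trichotomy (f x) x with hlt | heq | hgt
      · exact hdescentP x hlt
      · exact absurd (hpu x heq) (ne_of_gt hpx)
      · exfalso
        have hxt : x < t := lt_of_lt_of_le hgt (hle_t (f x))
        by_cases hqt : f x = t
        · obtain ⟨h, hh, hfix, h1⟩ := R1 p x hpx
          have hu := hnp _ (hclosed f hf h hh)
          have u1 : (fun z => h (f z)) x = t := by show h (f x) = t; rw [hqt, hfix.1]
          have u2 : (fun z => h (f z)) t = x := by show h (f t) = x; rw [hft, h1]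
          exact no_swap hu (ne_of_lt hxt) u1 u2
        · have hqlt : f x < t := lt_of_le_of_ne (hle_t (f x)) hqt
          have hpq : p ≠ f x := ne_of_lt (lt_trans hpx hgt)
          obtain ⟨h, hh, -, h1, h2⟩ := hrich p x (f x) t hpx hqlt hpq
          have hu := hnp _ (hclosed f hf h hh)
          have u1 : (fun z => h (f z)) x = t := by show h (f x) = t; rw [h2]
          have u2 : (fun z => h (f z)) t = x := by show h (f t) = x; rw [hft, h1]
          exact no_swap hu (ne_of_lt hxt) u1 u2

end Structure

lemma shape_card {n : ℕ} (p : Fin n) :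
    Fintype.card {f : Fin n → Fin n // ∀ x, (x < p → x < f x) ∧ (¬x < p → f x = p)}
      = (n - 1).descFactorial p.val := by
  rw [Fintype.card_congr
    (Equiv.subtypePiEquivPi (p := fun (x y : Fin n) => (x < p → x < y) ∧ (¬x < p → y = p))),
    Fintype.card_pi]
  have hterm : ∀ x : Fin n,
      Fintype.card {y : Fin n // (x < p → x < y) ∧ (¬x < p → y = p)}
        = if x < p then n - 1 - x.val else 1 := by
    intro x
    by_cases hx : x < p
    · rw [if_pos hx, Fintype.card_subtype]
      have he : ∀ y : Fin n, ((x < p → x < y) ∧ (¬x < p → y = p)) ↔ x < y := by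
        intro y
        exact ⟨fun hh => hh.1 hx, fun hy => ⟨fun _ => hy, fun hc => absurd hx hc⟩⟩
      rw [Finset.filter_congr (fun y _ => he y)]
      have h2 : Finset.univ.filter (fun y => x < y) = Finset.Ioi x := by
        ext y; simp
      rw [h2, Fin.card_Ioi]
    · rw [if_neg hx, Fintype.card_subtype]
      have he : ∀ y : Fin n, ((x < p → x < y) ∧ (¬x < p → y = p)) ↔ y = p := by
        intro y
        exact ⟨fun hh => hh.2 hx, fun hy => ⟨fun hc => absurd hc hx, fun _ => hy⟩⟩
      rw [Finset.filter_congr (fun y _ => he y), Finset.filter_eq']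
      simp
  rw [Finset.prod_congr rfl (fun x _ => hterm x)]
  have h3 : ∀ x : Fin n, (if x < p then n - 1 - x.val else 1)
      = (fun i => if i < p.val then n - 1 - i else 1) x.val := by
    intro x
    simp only [Fin.lt_def]
  rw [Finset.prod_congr rfl (fun x _ => h3 x),
    Fin.prod_univ_eq_prod_range (fun i => if i < p.val then n - 1 - i else 1) n,
    ← Finset.prod_filter]
  have h4 : (Finset.range n).filter (fun i => i < p.val) = Finset.range p.val := by
    ext i
    simp only [Finset.mem_filter, Finset.mem_range]
    exact ⟨fun h => h.2, fun h => ⟨lt_trans h p.isLt, h⟩⟩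
  rw [h4, Nat.descFactorial_eq_prod_range]

lemma fiber_card_le {n : ℕ} (hn3 : 3 ≤ n) (S : Finset (Fin n → Fin n))
    (hclosed : ∀ f ∈ S, ∀ g ∈ S, (fun x => g (f x)) ∈ S)
    (hnp : ∀ f ∈ S, Nonpermutational f)
    (hrich : ∀ i j k l : Fin n, i < j → k < l → i ≠ k →
      ∃ f ∈ S, FixIs f (⟨n - 1, by omega⟩ : Fin n) ∧ f i = j ∧ f k = l)
    (p : Fin n) (T : Finset (Fin n → Fin n))
    (hT : ∀ f ∈ T, f ∈ S ∧ f p = p) :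
    T.card ≤ (n - 1).descFactorial p.val := by
  rw [← shape_card p, ← Fintype.card_coe T]
  have hshape : ∀ g ∈ T, ∀ x : Fin n, (x < p → x < g x) ∧ (¬x < p → g x = p) := by
    intro g hg x
    obtain ⟨hgS, hgp⟩ := hT g hg
    have hs := structure_lemma hn3 S hclosed hnp hrich hgS hgp x
    refine ⟨hs.1, fun hnlt => ?_⟩
    rcases eq_or_lt_of_le (not_lt.1 hnlt) with h | h
    · rw [← h]; exact hgp
    · exact hs.2 h
  refine Fintype.card_le_of_injective (fun g => ⟨g.1, hshape g.1 g.2⟩) ?_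
  intro a b hab
  apply Subtype.ext
  show ((fun g : {g // g ∈ T} => (⟨g.1, hshape g.1 g.2⟩ :
    {f : Fin n → Fin n // ∀ x, (x < p → x < f x) ∧ (¬x < p → f x = p)})) a).val
      = ((fun g : {g // g ∈ T} => (⟨g.1, hshape g.1 g.2⟩ :
    {f : Fin n → Fin n // ∀ x, (x < p → x < f x) ∧ (¬x < p → f x = p)})) b).val
  rw [hab]

/-- Let `S` be a subsemigroup of `T_n` (composition acting on the right)
consisting of nonpermutational transformations, with `S_i` the set of members
having unique fixed point `i`, and suppose that for all `i < j` and `k < l`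
with `i ≠ k` some `f ∈ S_n` has `f i = j` and `f k = l` (the top element
`⟨n-1,_⟩` of `Fin n` playing the role of `n`).  Then
`|S| ≤ Σ_{i=1}^{n} (n-1)!/(n-i)! = Σ_{j=0}^{n-1} (n-1)!/j! = ⌊e·(n-1)!⌋`. -/
theorem card_le_floor_e_factorial
    (n : ℕ) (hn : 1 ≤ n) (S : Finset (Fin n → Fin n))
    (hclosed : ∀ f ∈ S, ∀ g ∈ S, (fun x => g (f x)) ∈ S)
    (hnp : ∀ f ∈ S, Nonpermutational f)
    (hrich : ∀ i j k l : Fin n, i < j → k < l → i ≠ k →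
      ∃ f ∈ S, FixIs f (⟨n - 1, by omega⟩ : Fin n) ∧ f i = j ∧ f k = l) :
    S.card ≤ ∑ j ∈ Finset.range n, Nat.factorial (n - 1) / Nat.factorial j ∧
    S.card ≤ Nat.floor (Real.exp 1 * (Nat.factorial (n - 1) : ℝ)) := by
  have key : S.card ≤ ∑ j ∈ Finset.range n, Nat.factorial (n - 1) / Nat.factorial j := by
    rcases lt_or_ge n 3 with hn3 | hn3
    · interval_cases n
      · -- n = 1
        have h2 := Finset.card_le_univ S
        simpa using h2
      · -- n = 2
        have hconst : ∀ f ∈ S, f = (fun _ => f 0) := by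
          intro f hf
          have h01 : f 0 = f 1 := by
            by_contra hne
            have himg : Finset.univ.image f = Finset.univ := by
              apply Finset.eq_univ_of_card
              rw [show (Finset.univ : Finset (Fin 2)) = {0, 1} by decide]
              rw [Finset.image_insert, Finset.image_singleton]
              rw [Finset.card_insert_of_notMem (by simp [hne]), Finset.card_singleton]
              simp
            have h := hnp f hf Finset.univ ⟨0, Finset.mem_univ 0⟩ himg
            rw [Finset.card_univ] at h
            simp at h
          funext x
          rcases x with ⟨xv, hx⟩
          interval_cases xv
          · rfl
          · exact h01.symm
        have hsub : S ⊆ {(fun _ => (0 : Fin 2)), (fun _ => (1 : Fin 2))} := by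
          intro f hf
          have h0 : f 0 = 0 ∨ f 0 = 1 := by
            by_cases h : f 0 = 0
            · exact Or.inl h
            · refine Or.inr (Fin.ext ?_)
              have h1 := (f 0).isLt
              have h2 : (f 0).val ≠ 0 := fun hc => h (Fin.ext hc)
              show (f 0).val = 1
              omega
          rw [hconst f hf]
          rcases h0 with h | h <;> rw [h] <;> simp
        calc S.card ≤ ({(fun _ => (0 : Fin 2)), (fun _ => (1 : Fin 2))} :
              Finset (Fin 2 → Fin 2)).card := Finset.card_le_card hsub
          _ ≤ 2 := le_trans (Finset.card_insert_le _ _) (by simp)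
          _ = ∑ j ∈ Finset.range 2, Nat.factorial 1 / Nat.factorial j := by decide
    · classical
      have hfix : ∀ g ∈ S, ∃ q, g q = q := fun g hg => fix_exists (by omega) (hnp g hg)
      set fp : (Fin n → Fin n) → Fin n :=
        fun g => if h : ∃ q, g q = q then h.choose else ⟨0, by omega⟩ with hfp
      have hfpS : ∀ g ∈ S, g (fp g) = fp g := by
        intro g hg
        have hex := hfix g hg
        simp only [hfp, dif_pos hex]
        exact hex.choose_spec
      rw [Finset.card_eq_sum_card_fiberwise (f := fp) (t := Finset.univ)
        (fun g _ => Finset.mem_univ _)]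
      have step1 : ∀ p : Fin n,
          (S.filter (fun g => fp g = p)).card ≤ (n - 1).descFactorial p.val := by
        intro p
        apply fiber_card_le hn3 S hclosed hnp hrich p
        intro g hg
        rw [Finset.mem_filter] at hg
        exact ⟨hg.1, by rw [← hg.2]; exact hfpS g hg.1⟩
      calc ∑ p : Fin n, (S.filter (fun g => fp g = p)).card
          ≤ ∑ p : Fin n, (n - 1).descFactorial p.val :=
            Finset.sum_le_sum (fun p _ => step1 p)
        _ = ∑ i ∈ Finset.range n, (n - 1).descFactorial i :=
            Fin.sum_univ_eq_sum_range _ n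
        _ = ∑ i ∈ Finset.range n, Nat.factorial (n - 1) / Nat.factorial (n - 1 - i) := by
            refine Finset.sum_congr rfl (fun i hi => ?_)
            rw [Finset.mem_range] at hi
            exact Nat.descFactorial_eq_div (by omega)
        _ = ∑ j ∈ Finset.range n, Nat.factorial (n - 1) / Nat.factorial j :=
            Finset.sum_range_reflect (fun j => Nat.factorial (n - 1) / Nat.factorial j) n
  refine ⟨key, le_trans key ?_⟩
  apply Nat.le_floor
  push_cast
  calc (∑ j ∈ Finset.range n, (↑(Nat.factorial (n - 1) / Nat.factorial j) : ℝ))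
      ≤ ∑ j ∈ Finset.range n, (Nat.factorial (n - 1) : ℝ) / (Nat.factorial j : ℝ) :=
        Finset.sum_le_sum (fun j _ => Nat.cast_div_le)
    _ = (∑ j ∈ Finset.range n, (1 : ℝ) ^ j / (Nat.factorial j : ℝ)) *
          (Nat.factorial (n - 1) : ℝ) := by
        rw [Finset.sum_mul]
        refine Finset.sum_congr rfl (fun j _ => ?_)
        rw [one_pow]
        ring
    _ ≤ Real.exp 1 * (Nat.factorial (n - 1) : ℝ) := by
        apply mul_le_mul_of_nonneg_right (Real.sum_le_exp_of_nonneg zero_le_one n)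
        positivity
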